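/- Let f be a ϑ-self-concordant barrier on D_f ⊆ R_{>0}^n, c ∈ R^n, and for η > 0 let C(η) minimize f_η(x) = η⟨c,x⟩ + f(x). For M > 0 define N_M(η) = {x ∈ D_f : f_η(x) − f_η(C(η)) ≤ M}. Then there exist constants 0 < m < 1 < M' depending only on n and M such that for all η > 0 and all x ∈ N_M(η), m·C(η)_i ≤ x_i ≤ M'·C(η)_i for all i ∈ [n]. -/

import Mathlib

/-- Local quadratic form `v ↦ vᵀ H v` induced by a Hessian matrix `H`. -/
noncomputable def quadForm {n : ℕ} (H : Matrix (Fin n) (Fin n) ℝ) (v : Fin n → ℝ) : ℝ :=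
  dotProduct v (H.mulVec v)

lemma quadForm_smul {n : ℕ} (H : Matrix (Fin n) (Fin n) ℝ) (r : ℝ) (v : Fin n → ℝ) :
    quadForm H (r • v) = r ^ 2 * quadForm H v := by
  simp [quadForm, Matrix.mulVec_smul, dotProduct_smul, smul_dotProduct,
    smul_eq_mul]
  ring

lemma quadForm_pos {n : ℕ} {H : Matrix (Fin n) (Fin n) ℝ} (h : H.PosDef)
    {v : Fin n → ℝ} (hv : v ≠ 0) : 0 < quadForm H v := by simpa [quadForm] using h.dotProduct_mulVec_pos hv

lemma quadForm_nonneg {n : ℕ} {H : Matrix (Fin n) (Fin n) ℝ} (h : H.PosDef)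
    (v : Fin n → ℝ) : 0 ≤ quadForm H v := by
  rcases eq_or_ne v 0 with rfl | hv
  · simp [quadForm]
  · exact (quadForm_pos h hv).le

lemma coord_bound {n : ℕ} {D : Set (Fin n → ℝ)}
    (hpos : ∀ x ∈ D, ∀ i, 0 < x i)
    {H : (Fin n → ℝ) → Matrix (Fin n) (Fin n) ℝ}
    (hPD : ∀ x ∈ D, (H x).PosDef)
    (hDik : ∀ x ∈ D, ∀ y : Fin n → ℝ, quadForm (H x) (y - x) < 1 → y ∈ D)
    {x : Fin n → ℝ} (hx : x ∈ D) (v : Fin n → ℝ) (i : Fin n) :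
    v i ^ 2 ≤ x i ^ 2 * quadForm (H x) v := by
  rcases eq_or_ne v 0 with rfl | hv
  · simp [quadForm]
  have hQ : 0 < quadForm (H x) v := quadForm_pos (hPD x hx) hv
  have hxi : 0 < x i := hpos x hx i
  have hsq : 0 < Real.sqrt (quadForm (H x) v) := Real.sqrt_pos.2 hQ
  -- key : ∀ s ∈ (0,1), s * |v i| < x i * sqrt Q
  have key : ∀ s : ℝ, 0 < s → s < 1 → s * |v i| ≤ x i * Real.sqrt (quadForm (H x) v) := by
    intro s hs0 hs1
    set t : ℝ := s / Real.sqrt (quadForm (H x) v) with ht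
    have ht0 : 0 < t := div_pos hs0 hsq
    have hmem : ∀ ε : ℝ, ε = 1 ∨ ε = -1 → x i + (ε * t) * v i > 0 := by
      intro ε hε
      have hy : (x + (ε * t) • v) ∈ D := by
        apply hDik x hx
        have : (x + (ε * t) • v) - x = (ε * t) • v := by abel
        rw [this, quadForm_smul]
        have hε2 : ε ^ 2 = 1 := by rcases hε with rfl | rfl <;> norm_num
        have : (ε * t) ^ 2 * quadForm (H x) v = s ^ 2 := by
          rw [mul_pow, hε2, one_mul, ht, div_pow, Real.sq_sqrt hQ.le]
          field_simp
        rw [this]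
        nlinarith
      have := hpos _ hy i
      simpa using this
    have h1 := hmem 1 (Or.inl rfl)
    have h2 := hmem (-1) (Or.inr rfl)
    have habs : t * |v i| < x i := by
      rcases abs_cases (v i) with ⟨h, _⟩ | ⟨h, _⟩ <;> rw [h] <;> nlinarith
    have : s * |v i| = t * |v i| * Real.sqrt (quadForm (H x) v) := by
      rw [ht]; field_simp
    rw [this]
    have : 0 ≤ |v i| := abs_nonneg _
    nlinarith
  have habs : |v i| ≤ x i * Real.sqrt (quadForm (H x) v) := by
    by_contra hcon
    push_neg at hcon
    have hb : 0 < x i * Real.sqrt (quadForm (H x) v) := by positivity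
    have hvpos : 0 < |v i| := lt_trans hb hcon
    obtain ⟨s, hs1, hs2⟩ := exists_between ((div_lt_one hvpos).2 hcon)
    have hs0 : 0 < s := lt_trans (by positivity) hs1
    have hk := key s hs0 hs2
    rw [div_lt_iff₀ hvpos] at hs1
    nlinarith
  calc v i ^ 2 = |v i| ^ 2 := (sq_abs _).symm
    _ ≤ (x i * Real.sqrt (quadForm (H x) v)) ^ 2 := by
        exact pow_le_pow_left₀ (abs_nonneg _) habs 2
    _ = x i ^ 2 * quadForm (H x) v := by
        rw [mul_pow, Real.sq_sqrt hQ.le]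

lemma sum_bound {n : ℕ} (hn : 0 < n) {D : Set (Fin n → ℝ)}
    (hpos : ∀ x ∈ D, ∀ i, 0 < x i)
    {H : (Fin n → ℝ) → Matrix (Fin n) (Fin n) ℝ}
    (hPD : ∀ x ∈ D, (H x).PosDef)
    (hDik : ∀ x ∈ D, ∀ y : Fin n → ℝ, quadForm (H x) (y - x) < 1 → y ∈ D)
    {x : Fin n → ℝ} (hx : x ∈ D) (v : Fin n → ℝ) :
    (1 / (n : ℝ)) * ∑ i, v i ^ 2 / x i ^ 2 ≤ quadForm (H x) v := by
  have hterm : ∀ i : Fin n, v i ^ 2 / x i ^ 2 ≤ quadForm (H x) v := by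
    intro i
    have h := coord_bound hpos hPD hDik hx v i
    have hxi : 0 < x i := hpos x hx i
    rw [div_le_iff₀ (by positivity)]
    linarith [h]
  have hsum : ∑ i, v i ^ 2 / x i ^ 2 ≤ (n : ℝ) * quadForm (H x) v := by
    calc ∑ i, v i ^ 2 / x i ^ 2 ≤ ∑ _i : Fin n, quadForm (H x) v :=
          Finset.sum_le_sum (fun i _ => hterm i)
      _ = (n : ℝ) * quadForm (H x) v := by simp [Finset.sum_const, mul_comm]
  have hn' : (0 : ℝ) < n := by exact_mod_cast hn
  rw [div_mul_eq_mul_div, div_le_iff₀ hn', one_mul]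
  linarith [hsum]

lemma core {n : ℕ} (hn : 0 < n) {D : Set (Fin n → ℝ)}
    {f : (Fin n → ℝ) → ℝ} {g : (Fin n → ℝ) → (Fin n → ℝ)}
    {H : (Fin n → ℝ) → Matrix (Fin n) (Fin n) ℝ}
    (hD : IsOpen D) (hconv : Convex ℝ D)
    (hpos : ∀ x ∈ D, ∀ i, 0 < x i)
    (hf : ContDiffOn ℝ 2 f D)
    (hg : ∀ x ∈ D, ∀ v : Fin n → ℝ, fderiv ℝ f x v = dotProduct (g x) v)
    (hH : ∀ x ∈ D, ∀ v w : Fin n → ℝ,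
      fderiv ℝ (fun y => dotProduct (g y) v) x w = dotProduct v ((H x).mulVec w))
    (hPD : ∀ x ∈ D, (H x).PosDef)
    (hDik : ∀ x ∈ D, ∀ y : Fin n → ℝ, quadForm (H x) (y - x) < 1 → y ∈ D)
    {x y : Fin n → ℝ} (hx : x ∈ D) (hy : y ∈ D) :
    dotProduct (g x) (y - x)
      + (1 / (n : ℝ)) * ∑ i, (y i / x i - 1 - Real.log (y i / x i)) ≤ f y - f x := by
  set a : Fin n → ℝ := y - x with ha
  set γ : ℝ → (Fin n → ℝ) := fun t => x + t • a with hγdef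
  have hseg : ∀ t ∈ Set.Icc (0:ℝ) 1, γ t ∈ D := by
    intro t ⟨ht0, ht1⟩
    have h := hconv hx hy (by linarith : (0:ℝ) ≤ 1 - t) ht0 (by ring)
    have : γ t = (1 - t) • x + t • y := by
      simp only [hγdef, ha]
      module
    rw [this]; exact h
  have hγi : ∀ t : ℝ, ∀ i, γ t i = x i + t * a i := by
    intro t i; simp [hγdef]
  have hγ : ∀ t : ℝ, HasDerivAt γ a t := by
    intro t
    have := ((hasDerivAt_id t).smul_const a).const_add x
    simpa [hγdef] using this
  have hdiff : ∀ z ∈ D, HasFDerivAt f (fderiv ℝ f z) z := fun z hz =>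
    ((hf.differentiableOn (by norm_num)).differentiableAt (hD.mem_nhds hz)).hasFDerivAt
  -- first derivative of f ∘ γ
  have hψ : ∀ t ∈ Set.Icc (0:ℝ) 1,
      HasDerivAt (fun s => f (γ s)) (dotProduct (g (γ t)) a) t := by
    intro t ht
    have h1 := (hdiff (γ t) (hseg t ht)).comp_hasDerivAt t (hγ t)
    rwa [hg (γ t) (hseg t ht) a] at h1
  -- differentiability of z ↦ ⟨g z, a⟩ on D
  have hGa_diff : ∀ z ∈ D, DifferentiableAt ℝ (fun z => dotProduct (g z) a) z := by
    intro z hz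
    have hf' : ContDiffOn ℝ 1 (fderiv ℝ f) D := hf.fderiv_of_isOpen hD (by norm_num)
    have h1 : DifferentiableAt ℝ (fun z => fderiv ℝ f z) z :=
      (hf'.differentiableOn (by norm_num)).differentiableAt (hD.mem_nhds hz)
    have h2 : DifferentiableAt ℝ (fun z => fderiv ℝ f z a) z :=
      h1.clm_apply (differentiableAt_const a)
    have heq : (fun z => fderiv ℝ f z a) =ᶠ[nhds z] (fun z => dotProduct (g z) a) :=
      Filter.eventuallyEq_of_mem (hD.mem_nhds hz) (fun w hw => hg w hw a)
    exact heq.differentiableAt_iff.mp h2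
  -- second derivative of f ∘ γ
  have hψ' : ∀ t ∈ Set.Icc (0:ℝ) 1,
      HasDerivAt (fun s => dotProduct (g (γ s)) a) (quadForm (H (γ t)) a) t := by
    intro t ht
    have hz := hseg t ht
    have h1 : HasFDerivAt (fun z => dotProduct (g z) a)
        (fderiv ℝ (fun z => dotProduct (g z) a) (γ t)) (γ t) :=
      (hGa_diff _ hz).hasFDerivAt
    have h2 := h1.comp_hasDerivAt t (hγ t)
    rwa [hH (γ t) hz a a] at h2
  -- log part derivatives
  have hposγ : ∀ t ∈ Set.Icc (0:ℝ) 1, ∀ i, 0 < x i + t * a i := by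
    intro t ht i
    have := hpos _ (hseg t ht) i
    rwa [hγi t i] at this
  have hP : ∀ (i : Fin n) (t : ℝ), HasDerivAt (fun s => x i + s * a i) (a i) t := by
    intro i t
    have := ((hasDerivAt_id t).mul_const (a i)).const_add (x i)
    simpa using this
  have hL : ∀ t ∈ Set.Icc (0:ℝ) 1, ∀ i : Fin n,
      HasDerivAt (fun s => Real.log (x i + s * a i)) (a i / (x i + t * a i)) t := by
    intro t ht i
    exact (hP i t).log (ne_of_gt (hposγ t ht i))
  have hL' : ∀ t ∈ Set.Icc (0:ℝ) 1, ∀ i : Fin n,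
      HasDerivAt (fun s => a i / (x i + s * a i)) (-(a i ^ 2 / (x i + t * a i) ^ 2)) t := by
    intro t ht i
    have h1 := ((hP i t).inv (ne_of_gt (hposγ t ht i))).const_mul (a i)
    have : a i * (-a i / (x i + t * a i) ^ 2) = -(a i ^ 2 / (x i + t * a i) ^ 2) := by ring
    rw [this] at h1
    simpa [div_eq_mul_inv] using h1
  -- combined functions
  set dfun : ℝ → ℝ := fun t => f (γ t) + (1 / (n:ℝ)) * ∑ i, Real.log (x i + t * a i) with hdfun
  set d'fun : ℝ → ℝ := fun t =>
    dotProduct (g (γ t)) a + (1 / (n:ℝ)) * ∑ i, a i / (x i + t * a i) with hd'fun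
  have hd : ∀ t ∈ Set.Icc (0:ℝ) 1, HasDerivAt dfun (d'fun t) t := by
    intro t ht
    exact (hψ t ht).add ((HasDerivAt.fun_sum (fun i _ => hL t ht i)).const_mul _)
  have hd' : ∀ t ∈ Set.Icc (0:ℝ) 1, HasDerivAt d'fun
      (quadForm (H (γ t)) a - (1 / (n:ℝ)) * ∑ i, a i ^ 2 / (x i + t * a i) ^ 2) t := by
    intro t ht
    have h1 : HasDerivAt (fun s => dotProduct (g (γ s)) a
          + (1 / (n:ℝ)) * ∑ i, a i / (x i + s * a i))
        (quadForm (H (γ t)) a + (1 / (n:ℝ)) * ∑ i, -(a i ^ 2 / (x i + t * a i) ^ 2)) t :=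
      (hψ' t ht).add ((HasDerivAt.fun_sum (fun i _ => hL' t ht i)).const_mul (1 / (n:ℝ)))
    have h2 : quadForm (H (γ t)) a + (1 / (n:ℝ)) * ∑ i, -(a i ^ 2 / (x i + t * a i) ^ 2)
        = quadForm (H (γ t)) a - (1 / (n:ℝ)) * ∑ i, a i ^ 2 / (x i + t * a i) ^ 2 := by
      rw [Finset.sum_neg_distrib]; ring
    rwa [h2] at h1
  have hge : ∀ t ∈ Set.Icc (0:ℝ) 1,
      0 ≤ quadForm (H (γ t)) a - (1 / (n:ℝ)) * ∑ i, a i ^ 2 / (x i + t * a i) ^ 2 := by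
    intro t ht
    have h := sum_bound hn hpos hPD hDik (hseg t ht) a
    have heq : ∑ i, a i ^ 2 / (γ t i) ^ 2 = ∑ i, a i ^ 2 / (x i + t * a i) ^ 2 := by
      apply Finset.sum_congr rfl
      intro i _
      rw [hγi t i]
    rw [heq] at h
    linarith
  -- d' is monotone on [0,1]
  have hmono : MonotoneOn d'fun (Set.Icc (0:ℝ) 1) := by
    apply monotoneOn_of_deriv_nonneg (convex_Icc 0 1)
    · exact fun t ht => (hd' t ht).continuousAt.continuousWithinAt
    · intro t ht
      rw [interior_Icc] at ht
      exact (hd' t (Set.mem_Icc_of_Ioo ht)).differentiableAt.differentiableWithinAt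
    · intro t ht
      rw [interior_Icc] at ht
      rw [(hd' t (Set.mem_Icc_of_Ioo ht)).deriv]
      exact hge t (Set.mem_Icc_of_Ioo ht)
  -- e monotone
  set efun : ℝ → ℝ := fun t => dfun t - t * d'fun 0 with hefun
  have hemono : MonotoneOn efun (Set.Icc (0:ℝ) 1) := by
    have he : ∀ t ∈ Set.Icc (0:ℝ) 1, HasDerivAt efun (d'fun t - d'fun 0) t := by
      intro t ht
      have := (hd t ht).sub ((hasDerivAt_id t).mul_const (d'fun 0))
      exact this.congr_deriv (by ring)
    apply monotoneOn_of_deriv_nonneg (convex_Icc 0 1)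
    · exact fun t ht => (he t ht).continuousAt.continuousWithinAt
    · intro t ht
      rw [interior_Icc] at ht
      exact (he t (Set.mem_Icc_of_Ioo ht)).differentiableAt.differentiableWithinAt
    · intro t ht
      rw [interior_Icc] at ht
      rw [(he t (Set.mem_Icc_of_Ioo ht)).deriv]
      have := hmono (Set.left_mem_Icc.2 zero_le_one) (Set.mem_Icc_of_Ioo ht) ht.1.le
      linarith
  have hkey : efun 0 ≤ efun 1 :=
    hemono (Set.left_mem_Icc.2 zero_le_one) (Set.right_mem_Icc.2 zero_le_one) zero_le_one
  -- unfold
  have hγ0 : γ 0 = x := by simp [hγdef]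
  have hγ1 : γ 1 = y := by simp [hγdef, ha]
  have hxpos : ∀ i, 0 < x i := hpos x hx
  have hypos : ∀ i, 0 < y i := hpos y hy
  have hterm : ∀ i : Fin n, y i / x i - 1 - Real.log (y i / x i)
      = a i / x i + Real.log (x i) - Real.log (y i) := by
    intro i
    rw [Real.log_div (ne_of_gt (hypos i)) (ne_of_gt (hxpos i))]
    have hxne : x i ≠ 0 := ne_of_gt (hxpos i)
    have : a i / x i = y i / x i - 1 := by
      rw [ha, Pi.sub_apply]; field_simp
    rw [this]; ring
  have s2' : (∑ i, Real.log (x i + a i)) = ∑ i, Real.log (y i) :=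
    Finset.sum_congr rfl fun i _ => by
      have : x i + a i = y i := by simp [ha]
      rw [this]
  simp only [hefun, hdfun, hd'fun, hγ0, hγ1, zero_mul, one_mul, add_zero, sub_zero] at hkey
  rw [s2'] at hkey
  have hsum : (∑ i, (y i / x i - 1 - Real.log (y i / x i)))
      = (∑ i, a i / x i) + (∑ i, Real.log (x i)) - ∑ i, Real.log (y i) := by
    rw [← Finset.sum_add_distrib, ← Finset.sum_sub_distrib]
    exact Finset.sum_congr rfl fun i _ => by rw [hterm i]
  rw [hsum]
  have hdistr : (1 / (n:ℝ)) * ((∑ i, a i / x i) + (∑ i, Real.log (x i)) - ∑ i, Real.log (y i))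
      = (1 / (n:ℝ)) * (∑ i, a i / x i) + (1 / (n:ℝ)) * (∑ i, Real.log (x i))
        - (1 / (n:ℝ)) * ∑ i, Real.log (y i) := by ring
  rw [hdistr]
  linarith

lemma grad_opt {n : ℕ} {D : Set (Fin n → ℝ)}
    {f : (Fin n → ℝ) → ℝ} {g : (Fin n → ℝ) → (Fin n → ℝ)}
    (hD : IsOpen D) (hf : ContDiffOn ℝ 2 f D)
    (hg : ∀ x ∈ D, ∀ v : Fin n → ℝ, fderiv ℝ f x v = dotProduct (g x) v)
    {c z : Fin n → ℝ} {η : ℝ} (hz : z ∈ D)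
    (hmin : ∀ y ∈ D, η * dotProduct c z + f z ≤ η * dotProduct c y + f y)
    (v : Fin n → ℝ) :
    dotProduct (g z) v = -(η * dotProduct c v) := by
  set q : ℝ → ℝ := fun t => η * dotProduct c (z + t • v) + f (z + t • v) with hq
  have h00 : z + (0:ℝ) • v = z := by simp
  have hγd : ∀ t : ℝ, HasDerivAt (fun t : ℝ => z + t • v) v t := by
    intro t
    simpa using ((hasDerivAt_id t).smul_const v).const_add z
  have hF : HasFDerivAt f (fderiv ℝ f z) z :=
    ((hf.differentiableOn (by norm_num)).differentiableAt (hD.mem_nhds hz)).hasFDerivAt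
  have hchain : HasDerivAt (fun t : ℝ => f (z + t • v)) (dotProduct (g z) v) 0 := by
    have hF' : HasFDerivAt f (fderiv ℝ f z) (z + (0:ℝ) • v) := by rwa [h00]
    have h := hF'.comp_hasDerivAt 0 (hγd 0)
    rwa [hg z hz v] at h
  have hlin : ∀ t : ℝ, dotProduct c (z + t • v)
      = dotProduct c z + t * dotProduct c v := by
    intro t
    simp [dotProduct_add, dotProduct_smul, smul_eq_mul]
  have hqd : HasDerivAt q (η * dotProduct c v + dotProduct (g z) v) 0 := by
    have h1 : HasDerivAt (fun t : ℝ => η * dotProduct c (z + t • v))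
        (η * dotProduct c v) 0 := by
      have heq : (fun t : ℝ => η * dotProduct c (z + t • v))
          = fun t : ℝ => η * dotProduct c z + t * (η * dotProduct c v) := by
        funext t; rw [hlin t]; ring
      rw [heq]
      simpa using ((hasDerivAt_id (0:ℝ)).mul_const (η * dotProduct c v)).const_add
        (η * dotProduct c z)
    exact h1.add hchain
  have hloc : IsLocalMin q 0 := by
    have hopen : IsOpen {t : ℝ | z + t • v ∈ D} :=
      hD.preimage (continuous_const.add (continuous_id.smul continuous_const))
    have h0 : (0 : ℝ) ∈ {t : ℝ | z + t • v ∈ D} := by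
      simp only [Set.mem_setOf_eq, h00]; exact hz
    filter_upwards [hopen.mem_nhds h0] with t ht
    have := hmin _ ht
    simpa [hq, h00] using this
  have hzero := hloc.hasDerivAt_eq_zero hqd
  linarith

lemma log_le_half {z : ℝ} (hz : 0 < z) : Real.log z ≤ z / 2 := by
  have h1 : Real.log (Real.sqrt z) ≤ Real.sqrt z - 1 :=
    Real.log_le_sub_one_of_pos (Real.sqrt_pos.2 hz)
  have h2 : Real.log (Real.sqrt z) = Real.log z / 2 := Real.log_sqrt hz.le
  have h3 : Real.sqrt z ^ 2 = z := Real.sq_sqrt hz.le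
  nlinarith [sq_nonneg (Real.sqrt z - 2)]

/-- the value neighborhoods `N_M(η)` of the central path of a
self-concordant barrier over a domain in the positive orthant are contained in
multiplicative neighborhoods `M_{m,M'}(η)`, with `m, M'` depending only on `n` and `M`. -/
theorem stmt10 (n : ℕ) (M : ℝ) (hM : 0 < M) :
    ∃ m M' : ℝ, 0 < m ∧ m < 1 ∧ 1 < M' ∧
      ∀ (D : Set (Fin n → ℝ)) (f : (Fin n → ℝ) → ℝ)
        (g : (Fin n → ℝ) → (Fin n → ℝ))
        (H : (Fin n → ℝ) → Matrix (Fin n) (Fin n) ℝ)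
        (c : Fin n → ℝ) (C : ℝ → Fin n → ℝ),
        IsOpen D → Convex ℝ D → (∀ x ∈ D, ∀ i, 0 < x i) →
        ContDiffOn ℝ 2 f D →
        (∀ x ∈ D, ∀ v : Fin n → ℝ, fderiv ℝ f x v = dotProduct (g x) v) →
        (∀ x ∈ D, ∀ v w : Fin n → ℝ,
          fderiv ℝ (fun y => dotProduct (g y) v) x w =
            dotProduct v ((H x).mulVec w)) →
        (∀ x ∈ D, (H x).PosDef) →
        (∀ x ∈ D, ∀ y : Fin n → ℝ, quadForm (H x) (y - x) < 1 → y ∈ D) →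
        (∀ x ∈ D, ∀ y : Fin n → ℝ, quadForm (H x) (y - x) < 1 →
          ∀ v : Fin n → ℝ, v ≠ 0 →
            1 - Real.sqrt (quadForm (H x) (y - x)) ≤
                Real.sqrt (quadForm (H y) v) / Real.sqrt (quadForm (H x) v) ∧
            Real.sqrt (quadForm (H y) v) / Real.sqrt (quadForm (H x) v) ≤
                1 / (1 - Real.sqrt (quadForm (H x) (y - x)))) →
        (∀ η : ℝ, 0 < η → C η ∈ D ∧
          ∀ y ∈ D, η * dotProduct c (C η) + f (C η) ≤
            η * dotProduct c y + f y) →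
        ∀ η : ℝ, 0 < η → ∀ x ∈ D,
          (η * dotProduct c x + f x) - (η * dotProduct c (C η) + f (C η)) ≤ M →
          ∀ i, m * C η i ≤ x i ∧ x i ≤ M' * C η i := by
  have hnM : (0:ℝ) ≤ (n:ℝ) * M := mul_nonneg (Nat.cast_nonneg n) hM.le
  refine ⟨Real.exp (-((n:ℝ) * M + 1)), 2 * (n:ℝ) * M + 2, Real.exp_pos _, ?_, ?_, ?_⟩
  · have : (-((n:ℝ) * M + 1)) < 0 := by linarith
    calc Real.exp (-((n:ℝ) * M + 1)) < Real.exp 0 := Real.exp_lt_exp.2 this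
      _ = 1 := Real.exp_zero
  · linarith
  intro D f g H c C hD hconv hpos hf hg hH hPD hDik _hSC hopt η hη x hx hval i
  rcases Nat.eq_zero_or_pos n with hn | hn
  · subst hn; exact i.elim0
  obtain ⟨hC, hmin⟩ := hopt η hη
  have hgrad := grad_opt hD hf hg hC hmin (x - C η)
  have hcore := core hn hD hconv hpos hf hg hH hPD hDik hC hx
  have hdsub : dotProduct c (x - C η)
      = dotProduct c x - dotProduct c (C η) := dotProduct_sub c x (C η)
  set S := ∑ j, (x j / C η j - 1 - Real.log (x j / C η j)) with hS
  have hSle : (1 / (n:ℝ)) * S ≤ M := by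
    rw [hgrad, hdsub] at hcore
    linarith
  have hn' : (0:ℝ) < (n:ℝ) := by exact_mod_cast hn
  have hSM : S ≤ (n:ℝ) * M := by
    rw [div_mul_eq_mul_div, one_mul, div_le_iff₀ hn'] at hSle
    linarith
  have hφpos : ∀ j : Fin n, 0 ≤ x j / C η j - 1 - Real.log (x j / C η j) := by
    intro j
    have hzj : 0 < x j / C η j := div_pos (hpos x hx j) (hpos _ hC j)
    have := Real.log_le_sub_one_of_pos hzj
    linarith
  have hφi : x i / C η i - 1 - Real.log (x i / C η i) ≤ (n:ℝ) * M := by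
    have h1 : x i / C η i - 1 - Real.log (x i / C η i) ≤ S := by
      rw [hS]
      exact Finset.single_le_sum (fun j _ => hφpos j) (Finset.mem_univ i)
    linarith
  set z := x i / C η i with hz
  have hz0 : 0 < z := div_pos (hpos x hx i) (hpos _ hC i)
  have hCi : 0 < C η i := hpos _ hC i
  have hxz : x i = z * C η i := by
    rw [hz]; field_simp
  constructor
  · -- lower bound
    have hlog : -((n:ℝ) * M + 1) ≤ Real.log z := by
      have := hφi
      linarith [hz0]
    have : Real.exp (-((n:ℝ) * M + 1)) ≤ z := by
      calc Real.exp (-((n:ℝ) * M + 1)) ≤ Real.exp (Real.log z) := Real.exp_le_exp.2 hlog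
        _ = z := Real.exp_log hz0
    rw [hxz]
    exact mul_le_mul_of_nonneg_right this hCi.le
  · -- upper bound
    have hhalf : Real.log z ≤ z / 2 := log_le_half hz0
    have : z ≤ 2 * (n:ℝ) * M + 2 := by linarith
    rw [hxz]
    exact mul_le_mul_of_nonneg_right this hCi.le
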